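/- Let G be a transitively closed episode, s a sequence, ρ a window size, and let n ≠ m be nodes of G such that any edges between n and m are weak and every instance i ∈ inst(G) satisfies ts(i(n)) = ts(i(m)). Let G' be the episode obtained from G by merging n and m into a single node carrying the events of both nodes, keeping all edges between {n, m} and the other nodes and discarding edges between n and m. Then G ⪯ G' and fr(G; s) = fr(G'; s). -/

import Mathlib

/-- A sequence event: a unique id, a label (from alphabet encoded as `ℕ`),
and an integer time stamp. -/
structure SeqEvent where
  id : ℕ
  lab : ℕ
  ts : ℤ
deriving DecidableEq

/-- An event sequence: a finite collection of sequence events with distinct ids,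
whose time stamps are monotone in the ids. -/
structure EventSeq where
  events : Finset SeqEvent
  id_inj : ∀ e ∈ events, ∀ f ∈ events, e.id = f.id → e = f
  ts_mono : ∀ e ∈ events, ∀ f ∈ events, e.id ≤ f.id → e.ts ≤ f.ts

/-- An episode: a finite set of episode events (identified by ids in `ℕ`) with labels,
a finite set of graph nodes, a map from events to nodes (surjectivity and the DAG
property are recorded in `Episode.WellFormed`), and weak and proper edges. -/
structure Episode where
  events : Finset ℕ
  lab : ℕ → ℕ
  nodes : Finset ℕ
  node : ℕ → ℕ
  weak : ℕ → ℕ → Prop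
  proper : ℕ → ℕ → Prop

namespace Episode

/-- An edge of the episode graph (weak or proper). -/
def edge (G : Episode) (a b : ℕ) : Prop := G.weak a b ∨ G.proper a b

/-- `G.Desc m n` : `n` is a descendant of `m`, i.e. there is a directed path from `m` to `n`. -/
def Desc (G : Episode) (m n : ℕ) : Prop := Relation.TransGen G.edge m n

/-- `G.PDesc m n` : `n` is a proper descendant of `m`, i.e. some directed path
from `m` to `n` contains a proper edge. -/
def PDesc (G : Episode) (m n : ℕ) : Prop :=
  ∃ a b, Relation.ReflTransGen G.edge m a ∧ G.proper a b ∧ Relation.ReflTransGen G.edge b n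

/-- Well-formedness of an episode: events map into the nodes, every node carries an
event, edges run between nodes, the weak and proper edges are disjoint, and the
graph is acyclic (a DAG). -/
structure WellFormed (G : Episode) : Prop where
  node_mem : ∀ e ∈ G.events, G.node e ∈ G.nodes
  node_surj : ∀ n ∈ G.nodes, ∃ e ∈ G.events, G.node e = n
  weak_mem : ∀ a b, G.weak a b → a ∈ G.nodes ∧ b ∈ G.nodes
  proper_mem : ∀ a b, G.proper a b → a ∈ G.nodes ∧ b ∈ G.nodes
  weak_proper_disjoint : ∀ a b, G.weak a b → G.proper a b → False
  acyclic : ∀ n, ¬ G.Desc n n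

/-- The transitive closure of an episode: add an edge from every node to each of its
descendants, proper if the descendant is a proper descendant, weak otherwise. -/
def tcl (G : Episode) : Episode :=
  { G with
    proper := fun a b => G.PDesc a b
    weak := fun a b => G.Desc a b ∧ ¬ G.PDesc a b }

/-- An episode is transitively closed if it coincides with its transitive closure. -/
def TransClosed (G : Episode) : Prop :=
  (∀ a b, G.proper a b ↔ G.PDesc a b) ∧
  (∀ a b, G.weak a b ↔ (G.Desc a b ∧ ¬ G.PDesc a b))

end Episode

/-- `m` is a coverage mapping of episode `G` into sequence `s`: an injective map from
the episode events into the sequence events preserving labels, mapping events of one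
node to a common time stamp, and respecting weak and proper edges. -/
def IsCoverMap (s : EventSeq) (G : Episode) (m : ℕ → SeqEvent) : Prop :=
  (∀ e ∈ G.events, m e ∈ s.events) ∧
  Set.InjOn m ↑G.events ∧
  (∀ e ∈ G.events, (m e).lab = G.lab e) ∧
  (∀ e ∈ G.events, ∀ f ∈ G.events, G.node e = G.node f → (m e).ts = (m f).ts) ∧
  (∀ e ∈ G.events, ∀ f ∈ G.events, G.Desc (G.node f) (G.node e) → (m f).ts ≤ (m e).ts) ∧
  (∀ e ∈ G.events, ∀ f ∈ G.events, G.PDesc (G.node f) (G.node e) → (m f).ts < (m e).ts)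

/-- A sequence `s` covers an episode `G`. -/
def Covers (s : EventSeq) (G : Episode) : Prop := ∃ m, IsCoverMap s G m

/-- `G ⪯ H` : every sequence covering `H` also covers `G`. -/
def Subepisode (G H : Episode) : Prop := ∀ s : EventSeq, Covers s H → Covers s G

/-- `G ∼ H` : `G ⪯ H` and `H ⪯ G`. -/
def EpisodeSimilar (G H : Episode) : Prop := Subepisode G H ∧ Subepisode H G

/-- The window `s[i, j]`: the subsequence of events with time stamps in `[i, j]`. -/
def EventSeq.window (s : EventSeq) (i j : ℤ) : EventSeq where
  events := s.events.filter (fun e => i ≤ e.ts ∧ e.ts ≤ j)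
  id_inj := fun e he f hf h =>
    s.id_inj e (Finset.mem_filter.mp he).1 f (Finset.mem_filter.mp hf).1 h
  ts_mono := fun e he f hf h =>
    s.ts_mono e (Finset.mem_filter.mp he).1 f (Finset.mem_filter.mp hf).1 h

/-- The support `fr(G; s)` with window size `ρ`: the number of integers `t` such that
the window `s[t, t + ρ - 1]` covers `G` (as an extended natural number). -/
noncomputable def support (ρ : ℤ) (s : EventSeq) (G : Episode) : ℕ∞ :=
  {t : ℤ | Covers (s.window t (t + ρ - 1)) G}.encard

/-- `first(i)` : the smallest time stamp in the range of the instance. -/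
noncomputable def instFirst (G : Episode) (m : ℕ → SeqEvent) : ℤ :=
  sInf ((fun e => (m e).ts) '' ↑G.events)

/-- `last(i)` : the largest time stamp in the range of the instance. -/
noncomputable def instLast (G : Episode) (m : ℕ → SeqEvent) : ℤ :=
  sSup ((fun e => (m e).ts) '' ↑G.events)

/-- `m` is an instance of `G` in `s` (with window size `ρ`): a coverage mapping of `G`
into `s` such that no used sequence event can be replaced by an unused one with the same
label, the same time stamp and a smaller id, and whose span is less than `ρ`. -/
def IsInstance (ρ : ℤ) (s : EventSeq) (G : Episode) (m : ℕ → SeqEvent) : Prop :=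
  IsCoverMap s G m ∧
  (∀ e ∈ G.events, ∀ f ∈ s.events, (∀ e' ∈ G.events, m e' ≠ f) →
      f.lab = (m e).lab → f.ts = (m e).ts → ¬ f.id < (m e).id) ∧
  instLast G m - instFirst G m ≤ ρ - 1

/-- The representative of a node after merging `m` into `n`. -/
def mergeRep (n m x : ℕ) : ℕ := if x = m then n else x

/-- The episode obtained from `G` by merging the nodes `n` and `m` into a single node
(namely `n`) carrying the events of both nodes, keeping all edges between `{n, m}` and
the other nodes and discarding the edges between `n` and `m`. -/
def mergeNodes (G : Episode) (n m : ℕ) : Episode where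
  events := G.events
  lab := G.lab
  nodes := G.nodes.erase m
  node := fun e => mergeRep n m (G.node e)
  proper := fun a b =>
    ∃ a' b', G.proper a' b' ∧ a = mergeRep n m a' ∧ b = mergeRep n m b'
  weak := fun a b =>
    ¬ (a = n ∧ b = n) ∧
    (∃ a' b', G.weak a' b' ∧ a = mergeRep n m a' ∧ b = mergeRep n m b') ∧
    ¬ ∃ a' b', G.proper a' b' ∧ a = mergeRep n m a' ∧ b = mergeRep n m b'

namespace MergeAux
open Episode Relation Finset
/-- rank of `x` inside `A`: number of smaller elements. -/
def rk (A : Finset ℕ) (x : ℕ) : ℕ := (A.filter (fun y => y < x)).card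

lemma rk_lt_card {A : Finset ℕ} {x : ℕ} (hx : x ∈ A) : rk A x < A.card := by
  apply Finset.card_lt_card
  rw [Finset.ssubset_iff_subset_ne]
  refine ⟨Finset.filter_subset _ _, fun h => ?_⟩
  have : x ∈ A.filter (fun y => y < x) := h.symm ▸ hx
  simp at this

lemma rk_strictMono {A : Finset ℕ} {x y : ℕ} (hx : x ∈ A) (hxy : x < y) :
    rk A x < rk A y := by
  apply Finset.card_lt_card
  rw [Finset.ssubset_iff_subset_ne]
  constructor
  · intro z hz
    simp only [Finset.mem_filter] at hz ⊢
    exact ⟨hz.1, lt_trans hz.2 hxy⟩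
  · intro h
    have : x ∈ A.filter (fun y => y < x) := by
      rw [h]; simp [hx, hxy]
    simp at this

lemma rk_injOn {A : Finset ℕ} {x y : ℕ} (hx : x ∈ A) (hy : y ∈ A)
    (h : rk A x = rk A y) : x = y := by
  rcases lt_trichotomy x y with h' | h' | h'
  · exact absurd h (rk_strictMono hx h').ne
  · exact h'
  · exact absurd h.symm (rk_strictMono hy h').ne

lemma rk_lt_rk {A : Finset ℕ} {x y : ℕ} (hx : x ∈ A) (hy : y ∈ A) (h : rk A x < rk A y) : x < y := by
  by_contra h'
  push_neg at h'
  rcases eq_or_lt_of_le h' with rfl | h'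
  · exact lt_irrefl _ h
  · have := rk_strictMono hy h'
    omega

lemma rk_surj {A : Finset ℕ} {r : ℕ} (hr : r < A.card) : ∃ x ∈ A, rk A x = r := by
  classical
  have hmaps : ∀ x ∈ A, rk A x ∈ Finset.range A.card := fun x hx =>
    Finset.mem_range.mpr (rk_lt_card hx)
  have hinj : ∀ (x y : ℕ), x ∈ A → y ∈ A → rk A x = rk A y → x = y := fun x y hx hy h =>
    rk_injOn hx hy h
  have hcard : (Finset.range A.card).card ≤ A.card := by simp
  obtain ⟨x, hx, hx2⟩ := Finset.surj_on_of_inj_on_of_card_le (fun x _ => rk A x)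
    hmaps hinj hcard r (Finset.mem_range.mpr hr)
  exact ⟨x, hx, hx2.symm⟩



variable {G : Episode} {n m : ℕ}

lemma mergeRep_eq_cases {a b : ℕ} (h : mergeRep n m a = mergeRep n m b) :
    a = b ∨ (a = n ∧ b = m) ∨ (a = m ∧ b = n) := by
  unfold mergeRep at h
  split_ifs at h <;> subst_vars <;> tauto

lemma pushEdge {a b : ℕ} (h : G.edge a b) (hne : mergeRep n m a ≠ mergeRep n m b) :
    (mergeNodes G n m).edge (mergeRep n m a) (mergeRep n m b) := by
  rcases h with hw | hp
  · by_cases hp' : ∃ a' b', G.proper a' b' ∧ mergeRep n m a = mergeRep n m a' ∧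
        mergeRep n m b = mergeRep n m b'
    · exact Or.inr hp'
    · refine Or.inl ⟨?_, ⟨a, b, hw, rfl, rfl⟩, hp'⟩
      rintro ⟨h1, h2⟩
      exact hne (h1.trans h2.symm)
  · exact Or.inr ⟨a, b, hp, rfl, rfl⟩

lemma pushRTG {a b : ℕ} (h : Relation.ReflTransGen G.edge a b) :
    Relation.ReflTransGen (mergeNodes G n m).edge (mergeRep n m a) (mergeRep n m b) := by
  induction h with
  | refl => exact Relation.ReflTransGen.refl
  | @tail x y _ h2 ih =>
    by_cases he : mergeRep n m x = mergeRep n m y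
    · exact he ▸ ih
    · exact ih.tail (pushEdge h2 he)

lemma pushDesc {a b : ℕ} (h : G.Desc a b) :
    Relation.ReflTransGen (mergeNodes G n m).edge (mergeRep n m a) (mergeRep n m b) :=
  pushRTG h.to_reflTransGen

lemma pushPDesc {a b : ℕ} (h : G.PDesc a b) :
    (mergeNodes G n m).PDesc (mergeRep n m a) (mergeRep n m b) := by
  obtain ⟨x, y, h1, h2, h3⟩ := h
  exact ⟨mergeRep n m x, mergeRep n m y, pushRTG h1, ⟨x, y, h2, rfl, rfl⟩, pushRTG h3⟩

/-- A cover map of the merged episode is a cover map of `G`. -/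
lemma coverOfMergeCover {s : EventSeq} {c : ℕ → SeqEvent}
    (hc : IsCoverMap s (mergeNodes G n m) c) : IsCoverMap s G c := by
  obtain ⟨h1, h2, h3, h4, h5, h6⟩ := hc
  refine ⟨h1, h2, h3, ?_, ?_, ?_⟩
  · intro e he f hf hef
    exact h4 e he f hf (by simp [mergeNodes, hef])
  · intro e he f hf hd
    have := pushDesc (n := n) (m := m) hd
    rcases (Relation.reflTransGen_iff_eq_or_transGen.mp this) with heq | ht
    · exact (h4 f hf e he (by simpa [mergeNodes] using heq.symm)).le
    · exact h5 e he f hf ht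
  · intro e he f hf hd
    exact h6 e he f hf (pushPDesc hd)


/-- Pull a merged edge back to an edge of `G`. -/
lemma pullEdge {a b : ℕ} (h : (mergeNodes G n m).edge a b) :
    ∃ a' b', G.edge a' b' ∧ a = mergeRep n m a' ∧ b = mergeRep n m b' := by
  rcases h with ⟨-, ⟨a', b', hw, ha, hb⟩, -⟩ | ⟨a', b', hp, ha, hb⟩
  · exact ⟨a', b', Or.inl hw, ha, hb⟩
  · exact ⟨a', b', Or.inr hp, ha, hb⟩

/-- A cover map of `G` giving the events of `n` and `m` a common time stamp is a
cover map of the merged episode. -/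
lemma coverToMergeCover {s : EventSeq} {c : ℕ → SeqEvent}
    (hG : G.WellFormed) (hc : IsCoverMap s G c)
    (Heq : ∀ e ∈ G.events, ∀ f ∈ G.events,
      G.node e = n → G.node f = m → (c e).ts = (c f).ts) :
    IsCoverMap s (mergeNodes G n m) c := by
  obtain ⟨h1, h2, h3, h4, h5, h6⟩ := hc
  -- equal merged nodes give equal time stamps
  have Teq : ∀ e ∈ G.events, ∀ f ∈ G.events,
      mergeRep n m (G.node e) = mergeRep n m (G.node f) → (c e).ts = (c f).ts := by
    intro e he f hf h
    rcases mergeRep_eq_cases h with h | ⟨ha, hb⟩ | ⟨ha, hb⟩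
    · exact h4 e he f hf h
    · exact Heq e he f hf ha hb
    · exact (Heq f hf e he hb ha).symm
  -- key monotonicity claim along merged paths
  have Tclaim : ∀ u v, Relation.ReflTransGen (mergeNodes G n m).edge u v →
      ∀ f ∈ G.events, ∀ e ∈ G.events,
        mergeRep n m (G.node f) = u → mergeRep n m (G.node e) = v →
        (c f).ts ≤ (c e).ts := by
    intro u v h
    induction h with
    | refl =>
      intro f hf e he hfu heu
      exact (Teq f hf e he (hfu.trans heu.symm)).le
    | @tail w v _ h2 ih =>
      intro f hf e he hfu heu
      obtain ⟨a', b', hedge, ha, hb⟩ := pullEdge h2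
      have ha' : a' ∈ G.nodes := by
        rcases hedge with hw | hp
        · exact (hG.weak_mem _ _ hw).1
        · exact (hG.proper_mem _ _ hp).1
      have hb' : b' ∈ G.nodes := by
        rcases hedge with hw | hp
        · exact (hG.weak_mem _ _ hw).2
        · exact (hG.proper_mem _ _ hp).2
      obtain ⟨g, hg, hgn⟩ := hG.node_surj a' ha'
      obtain ⟨h', hh, hhn⟩ := hG.node_surj b' hb'
      have s1 : (c f).ts ≤ (c g).ts := ih f hf g hg hfu (by rw [hgn, ← ha])
      have s2 : (c g).ts ≤ (c h').ts :=
        h5 h' hh g hg (by rw [hgn, hhn]; exact Relation.TransGen.single hedge)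
      have s3 : (c h').ts = (c e).ts := Teq h' hh e he (by rw [hhn, ← hb, heu])
      exact s1.trans (s2.trans s3.le)
  refine ⟨h1, h2, h3, ?_, ?_, ?_⟩
  · intro e he f hf h
    exact Teq e he f hf (by simpa [mergeNodes] using h)
  · intro e he f hf hd
    exact Tclaim _ _ hd.to_reflTransGen f hf e he rfl rfl
  · intro e he f hf hd
    obtain ⟨a, b, r1, hp', r2⟩ := hd
    obtain ⟨a', b', hp, ha, hb⟩ := hp'
    obtain ⟨g, hg, hgn⟩ := hG.node_surj a' (hG.proper_mem _ _ hp).1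
    obtain ⟨h', hh, hhn⟩ := hG.node_surj b' (hG.proper_mem _ _ hp).2
    have s1 : (c f).ts ≤ (c g).ts := Tclaim _ _ r1 f hf g hg rfl (by rw [hgn, ← ha])
    have s2 : (c g).ts < (c h').ts := by
      refine h6 h' hh g hg ?_
      rw [hgn, hhn]
      exact ⟨a', b', Relation.ReflTransGen.refl, hp, Relation.ReflTransGen.refl⟩
    have s3 : (c h').ts ≤ (c e).ts := Tclaim _ _ r2 h' hh e he (by rw [hhn, ← hb]) rfl
    exact s1.trans_lt (s2.trans_le s3)


/-- From a cover map of `G` in the window `s[t, t+ρ-1]` we can build an instance of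
`G` in `s` with the same time stamps. -/
lemma exists_instance (s : EventSeq) (G : Episode) (ρ t : ℤ) (hρ : 1 ≤ ρ)
    (c : ℕ → SeqEvent) (hc : IsCoverMap (s.window t (t + ρ - 1)) G c) :
    ∃ c', IsInstance ρ s G c' ∧ ∀ e ∈ G.events, (c' e).ts = (c e).ts := by
  classical
  obtain ⟨h1, h2, h3, h4, h5, h6⟩ := hc
  -- window membership
  have hwin : ∀ e ∈ G.events, c e ∈ s.events ∧ t ≤ (c e).ts ∧ (c e).ts ≤ t + ρ - 1 := by
    intro e he
    have := h1 e he
    simpa [EventSeq.window, Finset.mem_filter] using this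
  -- the class of sequence events sharing label and time stamp with `c e`
  set S : ℕ → Finset SeqEvent := fun e =>
    s.events.filter (fun f => f.lab = (c e).lab ∧ f.ts = (c e).ts) with hSdef
  set E : ℕ → Finset ℕ := fun e =>
    G.events.filter (fun e' => (c e').lab = (c e).lab ∧ (c e').ts = (c e).ts) with hEdef
  set I : ℕ → Finset ℕ := fun e => (S e).image SeqEvent.id with hIdef
  have hSmem : ∀ e f, f ∈ S e ↔ f ∈ s.events ∧ f.lab = (c e).lab ∧ f.ts = (c e).ts := by
    intro e f; simp [hSdef]
  have hEmem : ∀ e e', e' ∈ E e ↔ e' ∈ G.events ∧ (c e').lab = (c e).lab ∧ (c e').ts = (c e).ts := by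
    intro e e'; simp [hEdef]
  have hEself : ∀ e ∈ G.events, e ∈ E e := fun e he => (hEmem e e).mpr ⟨he, rfl, rfl⟩
  -- classes agree
  have hclass : ∀ e ∈ G.events, ∀ e', e' ∈ E e → S e' = S e ∧ E e' = E e ∧ I e' = I e := by
    intro e he e' he'
    obtain ⟨-, hl, ht⟩ := (hEmem e e').mp he'
    have hs : S e' = S e := by
      ext f; rw [hSmem, hSmem, hl, ht]
    refine ⟨hs, ?_, by rw [hIdef]; simp only [hs]⟩
    ext x; rw [hEmem, hEmem, hl, ht]
  -- cardinalities
  have hcardI : ∀ e, (I e).card = (S e).card := by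
    intro e
    apply Finset.card_image_of_injOn
    intro x hx y hy hxy
    exact s.id_inj x ((hSmem e x).mp hx).1 y ((hSmem e y).mp hy).1 hxy
  have hcardES : ∀ e ∈ G.events, (E e).card ≤ (S e).card := by
    intro e he
    apply Finset.card_le_card_of_injOn c
    · intro e' he'
      obtain ⟨he'', hl, ht⟩ := (hEmem e e').mp he'
      exact (hSmem e (c e')).mpr ⟨(hwin e' he'').1, hl, ht⟩
    · intro x hx y hy hxy
      exact h2 (by exact_mod_cast ((hEmem e x).mp (by simpa using hx)).1)
        (by exact_mod_cast ((hEmem e y).mp (by simpa using hy)).1) hxy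
  -- the rank of an episode event within its class
  set r : ℕ → ℕ := fun e => rk (E e) e with hrdef
  have hrlt : ∀ e ∈ G.events, r e < (I e).card := by
    intro e he
    calc r e < (E e).card := rk_lt_card (hEself e he)
    _ ≤ (S e).card := hcardES e he
    _ = (I e).card := (hcardI e).symm
  -- choose the representative: the element of `S e` whose id has rank `r e` in `I e`
  have hex : ∀ e, ∃ f, e ∈ G.events → f ∈ S e ∧ rk (I e) f.id = r e := by
    intro e
    by_cases he : e ∈ G.events
    · obtain ⟨x, hx, hx2⟩ := rk_surj (hrlt e he)
      obtain ⟨f, hf, hfid⟩ := Finset.mem_image.mp (by simpa [hIdef] using hx)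
      exact ⟨f, fun _ => ⟨hf, by rw [hfid]; exact hx2⟩⟩
    · exact ⟨c e, fun h => absurd h he⟩
  choose c' hc' using hex
  have hc'S : ∀ e ∈ G.events, c' e ∈ S e := fun e he => (hc' e he).1
  have hc'rk : ∀ e ∈ G.events, rk (I e) (c' e).id = r e := fun e he => (hc' e he).2
  have hc'mem : ∀ e ∈ G.events, c' e ∈ s.events := fun e he => ((hSmem e _).mp (hc'S e he)).1
  have hc'lab : ∀ e ∈ G.events, (c' e).lab = (c e).lab := fun e he => ((hSmem e _).mp (hc'S e he)).2.1
  have hc'ts : ∀ e ∈ G.events, (c' e).ts = (c e).ts := fun e he => ((hSmem e _).mp (hc'S e he)).2.2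
  have hidI : ∀ e ∈ G.events, (c' e).id ∈ I e := by
    intro e he
    rw [hIdef]
    exact Finset.mem_image_of_mem _ (hc'S e he)
  -- injectivity
  have hinj : Set.InjOn c' ↑G.events := by
    intro x hx y hy hxy
    have hx' : x ∈ G.events := hx
    have hy' : y ∈ G.events := hy
    by_cases hcl : (c y).lab = (c x).lab ∧ (c y).ts = (c x).ts
    · have hyE : y ∈ E x := (hEmem x y).mpr ⟨hy', hcl.1, hcl.2⟩
      obtain ⟨hsS, hsE, hsI⟩ := hclass x hx' y hyE
      have h1' : rk (I x) (c' x).id = rk (E x) x := hc'rk x hx'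
      have h2' : rk (I x) (c' y).id = rk (E x) y := by
        have h := hc'rk y hy'
        simp only [hsI, hrdef, hsE] at h
        exact h
      have : rk (E x) x = rk (E x) y := by rw [← h1', ← h2', hxy]
      exact rk_injOn (hEself x hx') hyE this
    · exfalso
      apply hcl
      constructor
      · rw [← hc'lab x hx', ← hc'lab y hy', hxy]
      · rw [← hc'ts x hx', ← hc'ts y hy', hxy]
  -- minimality
  have hmin : ∀ e ∈ G.events, ∀ f ∈ s.events, (∀ e' ∈ G.events, c' e' ≠ f) →
      f.lab = (c' e).lab → f.ts = (c' e).ts → ¬ f.id < (c' e).id := by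
    intro e he f hf hunused hlab hts hlt
    have hfS : f ∈ S e := (hSmem e f).mpr ⟨hf, hlab.trans (hc'lab e he), hts.trans (hc'ts e he)⟩
    have hfI : f.id ∈ I e := Finset.mem_image_of_mem _ hfS
    have hrk_lt : rk (I e) f.id < rk (I e) (c' e).id := rk_strictMono hfI hlt
    have hrk_lt' : rk (I e) f.id < (E e).card := by
      rw [hc'rk e he] at hrk_lt
      exact hrk_lt.trans_le (rk_lt_card (hEself e he)).le
    obtain ⟨e'', he''E, he''rk⟩ := rk_surj (A := E e) hrk_lt'
    have he''ev : e'' ∈ G.events := ((hEmem e e'').mp he''E).1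
    obtain ⟨hsS, hsE, hsI⟩ := hclass e he e'' he''E
    have : rk (I e) (c' e'').id = rk (I e) f.id := by
      have h := hc'rk e'' he''ev
      simp only [hsI, hrdef, hsE] at h
      rw [h, he''rk]
    have hideq : (c' e'').id = f.id := by
      refine rk_injOn ?_ hfI this
      have := hidI e'' he''ev
      rwa [hsI] at this
    exact hunused e'' he''ev (s.id_inj _ (hc'mem e'' he''ev) _ hf hideq)
  -- span
  have hspan : instLast G c' - instFirst G c' ≤ ρ - 1 := by
    rcases eq_or_ne G.events ∅ with hempty | hne
    · have : ((fun e => (c' e).ts) '' ↑G.events) = ∅ := by simp [hempty]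
      rw [instLast, instFirst, this]
      have h0 : sSup (∅ : Set ℤ) = 0 := by
        show dite _ _ _ = 0
        rw [dif_neg]; rintro ⟨⟨x, hx⟩, -⟩; exact hx
      have h0' : sInf (∅ : Set ℤ) = 0 := by
        show dite _ _ _ = 0
        rw [dif_neg]; rintro ⟨⟨x, hx⟩, -⟩; exact hx
      rw [h0, h0']
      omega
    · obtain ⟨e0, he0⟩ := Finset.nonempty_iff_ne_empty.mpr hne
      have hA : ((fun e => (c' e).ts) '' ↑G.events).Nonempty := ⟨_, ⟨e0, he0, rfl⟩⟩
      have hub : sSup ((fun e => (c' e).ts) '' ↑G.events) ≤ t + ρ - 1 := by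
        apply csSup_le hA
        rintro x ⟨e, he, rfl⟩
        show (c' e).ts ≤ _
        rw [hc'ts e he]
        exact (hwin e he).2.2
      have hlb : t ≤ sInf ((fun e => (c' e).ts) '' ↑G.events) := by
        apply le_csInf hA
        rintro x ⟨e, he, rfl⟩
        show _ ≤ (c' e).ts
        rw [hc'ts e he]
        exact (hwin e he).2.1
      rw [instLast, instFirst]
      omega
  refine ⟨c', ⟨⟨hc'mem, hinj, ?_, ?_, ?_, ?_⟩, hmin, hspan⟩, hc'ts⟩
  · intro e he
    rw [hc'lab e he]; exact h3 e he
  · intro e he f hf hef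
    rw [hc'ts e he, hc'ts f hf]; exact h4 e he f hf hef
  · intro e he f hf hd
    rw [hc'ts e he, hc'ts f hf]; exact h5 e he f hf hd
  · intro e he f hf hd
    rw [hc'ts e he, hc'ts f hf]; exact h6 e he f hf hd

end MergeAux

/-- let `G` be a transitively closed episode and `n ≠ m` nodes of `G`
such that any edges between `n` and `m` are weak and every instance gives the events of
`n` and of `m` a common time stamp. Merging `n` and `m` yields an episode `G'` with
`G ⪯ G'` and `fr(G; s) = fr(G'; s)`. -/
theorem merge_subepisode_and_support_eq (G : Episode)
    (hG : G.WellFormed) (hGt : G.TransClosed)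
    (s : EventSeq) (ρ : ℤ) (hρ : 1 ≤ ρ)
    (n m : ℕ) (hn : n ∈ G.nodes) (hm : m ∈ G.nodes) (hnm : n ≠ m)
    (hp1 : ¬ G.proper n m) (hp2 : ¬ G.proper m n)
    (hts : ∀ i, IsInstance ρ s G i →
      ∀ e ∈ G.events, ∀ f ∈ G.events,
        G.node e = n → G.node f = m → (i e).ts = (i f).ts) :
    Subepisode G (mergeNodes G n m) ∧
      support ρ s G = support ρ s (mergeNodes G n m) := by
  have sub : Subepisode G (mergeNodes G n m) := by
    rintro s' ⟨c, hc⟩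
    exact ⟨c, MergeAux.coverOfMergeCover hc⟩
  refine ⟨sub, ?_⟩
  unfold support
  congr 1
  ext t
  simp only [Set.mem_setOf_eq]
  constructor
  · rintro ⟨c, hc⟩
    obtain ⟨c', hinst, hts'⟩ := MergeAux.exists_instance s G ρ t hρ c hc
    refine ⟨c, MergeAux.coverToMergeCover hG hc ?_⟩
    intro e he f hf hen hfm
    have h := hts c' hinst e he f hf hen hfm
    rwa [hts' e he, hts' f hf] at h
  · rintro ⟨c, hc⟩
    exact ⟨c, MergeAux.coverOfMergeCover hc⟩
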